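/- Assume 0 ∈ A, every α ∈ A satisfies |α| ≤ 2, and every multi-index α^i of the poised Birkhoff interpolation data D belongs to A. If the spectral norm of the inverse of the normalized interpolation matrix satisfies ‖M̂^{-1}‖₂ ≤ Λ/√(q+1), then D is Λ-poised with respect to A in the ball B(y^0, Δ(Y)). -/

import Mathlib

noncomputable section

open Metric

/-- `ℝ^n` with the Euclidean norm. -/
abbrev E (n : ℕ) := EuclideanSpace ℝ (Fin n)

/-- Partial derivative in coordinate `i`. -/
def pd {n : ℕ} (i : Fin n) (f : E n → ℝ) : E n → ℝ :=
  fun x => fderiv ℝ f x (EuclideanSpace.single i 1)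

/-- Mixed partial derivative `∂^α` associated with the multi-index `α`. -/
def mpd {n : ℕ} (α : Fin n → ℕ) (f : E n → ℝ) : E n → ℝ :=
  (List.finRange n).foldr (fun i g => (pd i)^[α i] g) f

/-- The order `|α|` of a multi-index. -/
def mdeg {n : ℕ} (α : Fin n → ℕ) : ℕ := ∑ j, α j

/-- Index type for the natural basis of quadratic polynomials in `n` variables:
`1`, the `n` linear monomials, and the quadratic monomials indexed by unordered pairs.
Its cardinality is `q + 1 = (n+1)(n+2)/2`. -/
abbrev BIdx (n : ℕ) := Unit ⊕ Fin n ⊕ Sym2 (Fin n)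

/-- The natural basis `1, x_1, …, x_n, (1/2)x_1², x_1x_2, …, (1/2)x_n²` of `P_n^2`. -/
def natBasis {n : ℕ} : BIdx n → E n → ℝ
  | Sum.inl _ => fun _ => 1
  | Sum.inr (Sum.inl i) => fun x => x i
  | Sum.inr (Sum.inr s) => fun x =>
      Sym2.lift ⟨fun i j => (if i = j then (1:ℝ)/2 else 1) * (x i * x j), by
        intro a b
        by_cases h : a = b
        · subst h; ring
        · simp only [if_neg h, if_neg (Ne.symm h)]; ring⟩ s

/-- The base point `y^0` of interpolation data. -/
def center {n : ℕ} (y : BIdx n → E n) : E n := y (Sum.inl ())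

/-- `Δ(Y) = max_i ‖y^i − y^0‖`. -/
def rad {n : ℕ} (y : BIdx n → E n) : ℝ :=
  Finset.univ.sup' Finset.univ_nonempty fun i => ‖y i - center y‖

/-- The normalized points `ŷ^i = (y^i − y^0)/Δ(Y)`. -/
def yhat {n : ℕ} (y : BIdx n → E n) (i : BIdx n) : E n := (rad y)⁻¹ • (y i - center y)

/-- The normalized interpolation matrix `M̂_{ij} = (∂^{α^i} φ_j)(ŷ^i)`. -/
def Mhat {n : ℕ} (y : BIdx n → E n) (α : BIdx n → Fin n → ℕ) : Matrix (BIdx n) (BIdx n) ℝ :=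
  Matrix.of fun i j => mpd (α i) (natBasis j) (yhat y i)

/-- The quadratic polynomial with coefficient vector `v` in the natural basis. -/
def evalP {n : ℕ} (v : BIdx n → ℝ) : E n → ℝ := fun x => ∑ j, v j * natBasis j x

/-- `v` lists the coefficient vectors of the Birkhoff interpolation polynomials:
`∂^{α^{i'}} λ_i (ŷ^{i'}) = δ_{i i'}`. -/
def BirkhoffLam {n : ℕ} (y : BIdx n → E n) (α : BIdx n → Fin n → ℕ)
    (v : BIdx n → BIdx n → ℝ) : Prop :=
  ∀ i i', mpd (α i') (evalP (v i)) (yhat y i') = if i = i' then 1 else 0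

/-- The spectral (ℓ²-operator) norm of a real matrix. -/
def specNorm {ι : Type*} [Fintype ι] [DecidableEq ι] (M : Matrix ι ι ℝ) : ℝ :=
  ‖Matrix.toEuclideanCLM (𝕜 := ℝ) M‖

/-- `q + 1 = (n+1)(n+2)/2`. -/
def Q1 (n : ℕ) : ℕ := (n + 1) * (n + 2) / 2

set_option linter.unreachableTactic false
set_option linter.unusedTactic false

abbrev QP (n : ℕ) := ℝ × (Fin n → ℝ) × Matrix (Fin n) (Fin n) ℝ

def evalQ {n : ℕ} (p : QP n) (x : E n) : ℝ :=
  p.1 + ∑ k, p.2.1 k * x k + (1/2) * ∑ k, ∑ l, p.2.2 k l * (x k * x l)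

def pdQ {n : ℕ} (i : Fin n) (p : QP n) : QP n :=
  (p.2.1 i, fun l => (p.2.2 i l + p.2.2 l i)/2, 0)

lemma hasFDerivAt_evalQ {n : ℕ} (p : QP n) (x : E n) :
    HasFDerivAt (fun x => evalQ p x)
      ((∑ k, p.2.1 k • (EuclideanSpace.proj k : E n →L[ℝ] ℝ)) +
        (1/2 : ℝ) • ∑ k, ∑ l, p.2.2 k l •
          (x k • (EuclideanSpace.proj l : E n →L[ℝ] ℝ) + x l • (EuclideanSpace.proj k : E n →L[ℝ] ℝ))) x := by
  have h1 : HasFDerivAt (fun x : E n => ∑ k, p.2.1 k * x k)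
      (∑ k, p.2.1 k • (EuclideanSpace.proj k : E n →L[ℝ] ℝ)) x := by
    refine HasFDerivAt.fun_sum fun k _ => ?_
    exact ((EuclideanSpace.proj k : E n →L[ℝ] ℝ).hasFDerivAt (x := x)).const_mul _
  have h2 : HasFDerivAt (fun x : E n => ∑ k, ∑ l, p.2.2 k l * (x k * x l))
      (∑ k, ∑ l, p.2.2 k l •
          (x k • (EuclideanSpace.proj l : E n →L[ℝ] ℝ) + x l • (EuclideanSpace.proj k : E n →L[ℝ] ℝ))) x := by
    refine HasFDerivAt.fun_sum fun k _ => HasFDerivAt.fun_sum fun l _ => ?_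
    exact (((EuclideanSpace.proj k : E n →L[ℝ] ℝ).hasFDerivAt (x := x)).mul
      ((EuclideanSpace.proj l : E n →L[ℝ] ℝ).hasFDerivAt (x := x))).const_mul _
  simpa [evalQ] using (((hasFDerivAt_const p.1 x).fun_add h1).fun_add (h2.const_mul (1/2 : ℝ)))

lemma pd_evalQ {n : ℕ} (i : Fin n) (p : QP n) :
    pd i (fun x => evalQ p x) = fun x => evalQ (pdQ i p) x := by
  funext x
  have h := (hasFDerivAt_evalQ p x).fderiv
  simp only [pd, h]
  simp only [ContinuousLinearMap.add_apply, ContinuousLinearMap.smul_apply,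
    ContinuousLinearMap.sum_apply, PiLp.proj_apply, EuclideanSpace.single_apply,
    smul_eq_mul, mul_ite, mul_one, mul_zero, Finset.sum_ite_eq', Finset.mem_univ, if_true]
  simp only [mul_add, mul_ite, mul_zero, Finset.sum_add_distrib, Finset.sum_ite_eq',
    Finset.sum_ite_irrel, Finset.sum_const_zero, Finset.mem_univ, if_true]
  simp only [evalQ, pdQ, Matrix.zero_apply, zero_mul, Finset.sum_const_zero, mul_zero, add_zero]
  rw [Finset.mul_sum, Finset.mul_sum, ← Finset.sum_add_distrib]
  congr 1
  exact Finset.sum_congr rfl fun l _ => by ring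

def mpdQ {n : ℕ} (a : Fin n → ℕ) (p : QP n) : QP n :=
  (List.finRange n).foldr (fun i q => (pdQ i)^[a i] q) p

lemma pd_iter_evalQ {n : ℕ} (i : Fin n) (k : ℕ) (p : QP n) :
    (pd i)^[k] (fun x => evalQ p x) = fun x => evalQ ((pdQ i)^[k] p) x := by
  induction k generalizing p with
  | zero => rfl
  | succ m ih =>
    rw [Function.iterate_succ_apply, Function.iterate_succ_apply, pd_evalQ, ih]

lemma mpd_evalQ {n : ℕ} (a : Fin n → ℕ) (p : QP n) :
    mpd a (fun x => evalQ p x) = fun x => evalQ (mpdQ a p) x := by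
  unfold mpd mpdQ
  induction List.finRange n generalizing p with
  | nil => rfl
  | cons hd tl ih => simp only [List.foldr_cons, ih, pd_iter_evalQ]

-- linearity
lemma pdQ_add {n : ℕ} (i : Fin n) (p q : QP n) : pdQ i (p + q) = pdQ i p + pdQ i q := by
  unfold pdQ
  refine Prod.ext ?_ (Prod.ext ?_ ?_)
  · simp
  · funext l
    simp only [Prod.snd_add, Prod.fst_add, Pi.add_apply, Matrix.add_apply]
    ring
  · simp

lemma pdQ_smul {n : ℕ} (i : Fin n) (c : ℝ) (p : QP n) : pdQ i (c • p) = c • pdQ i p := by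
  unfold pdQ
  refine Prod.ext ?_ (Prod.ext ?_ ?_)
  · simp
  · funext l
    simp only [Prod.smul_snd, Prod.smul_fst, Pi.smul_apply, Matrix.smul_apply, smul_eq_mul]
    ring
  · simp

lemma pdQ_iter_add {n : ℕ} (i : Fin n) (k : ℕ) (p q : QP n) :
    (pdQ i)^[k] (p + q) = (pdQ i)^[k] p + (pdQ i)^[k] q := by
  induction k generalizing p q with
  | zero => rfl
  | succ m ih => rw [Function.iterate_succ_apply, Function.iterate_succ_apply,
      Function.iterate_succ_apply, pdQ_add, ih]

lemma pdQ_iter_smul {n : ℕ} (i : Fin n) (k : ℕ) (c : ℝ) (p : QP n) :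
    (pdQ i)^[k] (c • p) = c • (pdQ i)^[k] p := by
  induction k generalizing p with
  | zero => rfl
  | succ m ih => rw [Function.iterate_succ_apply, Function.iterate_succ_apply, pdQ_smul, ih]

lemma mpdQ_add {n : ℕ} (a : Fin n → ℕ) (p q : QP n) :
    mpdQ a (p + q) = mpdQ a p + mpdQ a q := by
  unfold mpdQ
  induction List.finRange n generalizing p q with
  | nil => rfl
  | cons hd tl ih => simp only [List.foldr_cons, ih, pdQ_iter_add]

lemma mpdQ_smul {n : ℕ} (a : Fin n → ℕ) (c : ℝ) (p : QP n) :
    mpdQ a (c • p) = c • mpdQ a p := by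
  unfold mpdQ
  induction List.finRange n generalizing p with
  | nil => rfl
  | cons hd tl ih => simp only [List.foldr_cons, ih, pdQ_iter_smul]

def NQ {n : ℕ} (p : QP n) : ℝ :=
  |p.1| + ∑ k, |p.2.1 k| + (1/2) * ∑ k, ∑ l, |p.2.2 k l| + (1/2) * ∑ k, |p.2.2 k k|

lemma NQ_nonneg {n : ℕ} (p : QP n) : 0 ≤ NQ p := by
  unfold NQ
  positivity

lemma coord_le_norm {n : ℕ} (x : E n) (k : Fin n) : |x k| ≤ ‖x‖ := by
  rw [EuclideanSpace.norm_eq]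
  rw [← Real.sqrt_sq_eq_abs]
  apply Real.sqrt_le_sqrt
  have : (x k)^2 = ‖x k‖^2 := by simp [sq_abs]
  rw [this]
  exact Finset.single_le_sum (f := fun l => ‖x l‖^2) (fun l _ => by positivity) (Finset.mem_univ k)

lemma abs_evalQ_le {n : ℕ} (p : QP n) (x : E n) (hx : ‖x‖ ≤ 1) : |evalQ p x| ≤ NQ p := by
  have hcoord : ∀ k, |x k| ≤ 1 := fun k => (coord_le_norm x k).trans hx
  have h1 : |∑ k, p.2.1 k * x k| ≤ ∑ k, |p.2.1 k| := by
    refine (Finset.abs_sum_le_sum_abs _ _).trans (Finset.sum_le_sum fun k _ => ?_)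
    rw [abs_mul]
    calc |p.2.1 k| * |x k| ≤ |p.2.1 k| * 1 := by
          exact mul_le_mul_of_nonneg_left (hcoord k) (abs_nonneg _)
      _ = |p.2.1 k| := mul_one _
  have h2 : |∑ k, ∑ l, p.2.2 k l * (x k * x l)| ≤ ∑ k, ∑ l, |p.2.2 k l| := by
    refine (Finset.abs_sum_le_sum_abs _ _).trans (Finset.sum_le_sum fun k _ => ?_)
    refine (Finset.abs_sum_le_sum_abs _ _).trans (Finset.sum_le_sum fun l _ => ?_)
    rw [abs_mul, abs_mul]
    calc |p.2.2 k l| * (|x k| * |x l|) ≤ |p.2.2 k l| * (1 * 1) := by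
          refine mul_le_mul_of_nonneg_left ?_ (abs_nonneg _)
          exact mul_le_mul (hcoord k) (hcoord l) (abs_nonneg _) zero_le_one
      _ = |p.2.2 k l| := by ring
  calc |evalQ p x| ≤ |p.1| + |∑ k, p.2.1 k * x k| + |(1/2 : ℝ)| * |∑ k, ∑ l, p.2.2 k l * (x k * x l)| := by
        unfold evalQ
        refine (abs_add_le _ _).trans ?_
        rw [abs_mul]
        exact add_le_add_left (abs_add_le _ _) _
    _ ≤ |p.1| + ∑ k, |p.2.1 k| + (1/2) * ∑ k, ∑ l, |p.2.2 k l| := by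
        have : |(1/2 : ℝ)| = 1/2 := by norm_num
        rw [this]
        exact add_le_add (add_le_add_right h1 _) (by linarith [h2])
    _ ≤ NQ p := by
        unfold NQ
        have : (0:ℝ) ≤ (1/2) * ∑ k, |p.2.2 k k| := by positivity
        linarith

lemma NQ_pdQ_le {n : ℕ} (i : Fin n) (p : QP n) : NQ (pdQ i p) ≤ NQ p := by
  unfold NQ pdQ
  simp only [Matrix.zero_apply, abs_zero, Finset.sum_const_zero, mul_zero, add_zero]
  have hrow : ∑ l, |p.2.2 i l| ≤ ∑ k, ∑ l, |p.2.2 k l| :=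
    Finset.single_le_sum (f := fun k => ∑ l, |p.2.2 k l|)
      (fun k _ => Finset.sum_nonneg fun l _ => abs_nonneg _) (Finset.mem_univ i)
  have h2 : ∑ l ∈ Finset.univ.erase i, |p.2.2 l i| ≤
      ∑ k ∈ Finset.univ.erase i, ∑ l, |p.2.2 k l| :=
    Finset.sum_le_sum fun k _ => Finset.single_le_sum (f := fun l => |p.2.2 k l|)
      (fun l _ => abs_nonneg _) (Finset.mem_univ i)
  have hT : ∑ k, ∑ l, |p.2.2 k l| =
      ∑ l, |p.2.2 i l| + ∑ k ∈ Finset.univ.erase i, ∑ l, |p.2.2 k l| :=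
    (Finset.add_sum_erase _ (fun k => ∑ l, |p.2.2 k l|) (Finset.mem_univ i)).symm
  have hcolsplit : ∑ l, |p.2.2 l i| = |p.2.2 i i| + ∑ l ∈ Finset.univ.erase i, |p.2.2 l i| :=
    (Finset.add_sum_erase _ (fun l => |p.2.2 l i|) (Finset.mem_univ i)).symm
  have hdd : |p.2.2 i i| ≤ ∑ k, |p.2.2 k k| :=
    Finset.single_le_sum (f := fun k => |p.2.2 k k|) (fun k _ => abs_nonneg _) (Finset.mem_univ i)
  have hbi : |p.2.1 i| ≤ ∑ k, |p.2.1 k| :=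
    Finset.single_le_sum (f := fun k => |p.2.1 k|) (fun k _ => abs_nonneg _) (Finset.mem_univ i)
  have hmid : ∑ l, |(p.2.2 i l + p.2.2 l i)/2| ≤
      (1/2) * ∑ l, |p.2.2 i l| + (1/2) * ∑ l, |p.2.2 l i| := by
    calc ∑ l, |(p.2.2 i l + p.2.2 l i)/2| ≤ ∑ l, (|p.2.2 i l|/2 + |p.2.2 l i|/2) := by
          refine Finset.sum_le_sum fun l _ => ?_
          rw [abs_div, abs_two]
          calc |p.2.2 i l + p.2.2 l i| / 2 ≤ (|p.2.2 i l| + |p.2.2 l i|) / 2 := by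
                apply div_le_div_of_nonneg_right (abs_add_le _ _); norm_num
            _ = |p.2.2 i l|/2 + |p.2.2 l i|/2 := by ring
      _ = (1/2) * ∑ l, |p.2.2 i l| + (1/2) * ∑ l, |p.2.2 l i| := by
          rw [Finset.sum_add_distrib, Finset.mul_sum, Finset.mul_sum]
          congr 1 <;> exact Finset.sum_congr rfl fun l _ => by ring
  have habs : |p.1| ≥ 0 := abs_nonneg _
  have hdiag : (0:ℝ) ≤ ∑ k, |p.2.2 k k| := Finset.sum_nonneg fun k _ => abs_nonneg _
  linarith

lemma NQ_mpdQ_le {n : ℕ} (a : Fin n → ℕ) (p : QP n) : NQ (mpdQ a p) ≤ NQ p := by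
  unfold mpdQ
  induction List.finRange n generalizing p with
  | nil => exact le_refl _
  | cons hd tl ih =>
    simp only [List.foldr_cons]
    refine le_trans ?_ (ih p)
    generalize (List.foldr (fun i q => (pdQ i)^[a i] q) p tl) = P
    induction a hd with
    | zero => exact le_refl _
    | succ m ihm => exact le_trans (by rw [Function.iterate_succ_apply']; exact NQ_pdQ_le _ _) ihm

def toQP {n : ℕ} (w : BIdx n → ℝ) : QP n :=
  (w (Sum.inl ()), fun k => w (Sum.inr (Sum.inl k)),
    Matrix.of fun k l => w (Sum.inr (Sum.inr s(k, l))))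

lemma sym2_fiber_sum {n : ℕ} (w : Sym2 (Fin n) → ℝ) (x : E n) (s : Sym2 (Fin n)) :
    ∑ p ∈ (Finset.univ ×ˢ Finset.univ).filter (fun p : Fin n × Fin n => s(p.1, p.2) = s),
      w s(p.1, p.2) * (x p.1 * x p.2) = 2 * (w s * natBasis (Sum.inr (Sum.inr s)) x) := by
  induction s with
  | _ a b =>
    by_cases hab : a = b
    · subst hab
      have hf : (Finset.univ ×ˢ Finset.univ).filter
          (fun p : Fin n × Fin n => s(p.1, p.2) = s(a, a)) = {(a, a)} := by
        ext p
        simp [Sym2.eq_iff, Prod.ext_iff, and_comm]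
      rw [hf, Finset.sum_singleton]
      simp only [natBasis, Sym2.lift_mk]
      norm_num
      ring
    · have hf : (Finset.univ ×ˢ Finset.univ).filter
          (fun p : Fin n × Fin n => s(p.1, p.2) = s(a, b)) = {(a, b), (b, a)} := by
        ext p
        simp [Sym2.eq_iff, Prod.ext_iff]
      rw [hf]
      rw [Finset.sum_insert (by simp [Prod.ext_iff]; tauto), Finset.sum_singleton]
      simp [natBasis, Sym2.lift_mk, if_neg hab, Sym2.eq_swap]
      ring

lemma evalP_eq {n : ℕ} (w : BIdx n → ℝ) : evalP w = fun x => evalQ (toQP w) x := by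
  funext x
  unfold evalP evalQ toQP
  rw [Fintype.sum_sum_type, Fintype.sum_sum_type]
  simp only [Finset.univ_unique, Finset.sum_singleton, Matrix.of_apply]
  have hquad : ∑ s : Sym2 (Fin n), w (Sum.inr (Sum.inr s)) * natBasis (Sum.inr (Sum.inr s)) x
      = (1/2) * ∑ k, ∑ l, w (Sum.inr (Sum.inr s(k, l))) * (x k * x l) := by
    have := Finset.sum_fiberwise_of_maps_to
      (g := fun p : Fin n × Fin n => s(p.1, p.2))
      (f := fun p : Fin n × Fin n => w (Sum.inr (Sum.inr s(p.1, p.2))) * (x p.1 * x p.2))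
      (s := Finset.univ ×ˢ Finset.univ) (t := Finset.univ) (fun p _ => Finset.mem_univ _)
    rw [← Finset.sum_product' (f := fun k l => w (Sum.inr (Sum.inr s(k, l))) * (x k * x l)),
      ← this]
    rw [Finset.mul_sum]
    refine Finset.sum_congr rfl fun s _ => ?_
    rw [sym2_fiber_sum (fun s => w (Sum.inr (Sum.inr s))) x s]
    ring
  rw [hquad]
  simp [natBasis]
  ring

lemma evalQ_add {n : ℕ} (p q : QP n) (x : E n) :
    evalQ (p + q) x = evalQ p x + evalQ q x := by
  unfold evalQ
  simp only [Prod.fst_add, Prod.snd_add, Pi.add_apply, Matrix.add_apply]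
  have h1 : ∑ k, (p.2.1 k + q.2.1 k) * x k = ∑ k, p.2.1 k * x k + ∑ k, q.2.1 k * x k := by
    rw [← Finset.sum_add_distrib]; exact Finset.sum_congr rfl fun k _ => by ring
  have h2 : ∑ k, ∑ l, (p.2.2 k l + q.2.2 k l) * (x k * x l)
      = ∑ k, ∑ l, p.2.2 k l * (x k * x l) + ∑ k, ∑ l, q.2.2 k l * (x k * x l) := by
    rw [← Finset.sum_add_distrib]
    refine Finset.sum_congr rfl fun k _ => ?_
    rw [← Finset.sum_add_distrib]
    exact Finset.sum_congr rfl fun l _ => by ring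
  rw [h1, h2]; ring

lemma evalQ_smul {n : ℕ} (c : ℝ) (p : QP n) (x : E n) :
    evalQ (c • p) x = c * evalQ p x := by
  unfold evalQ
  simp only [Prod.smul_fst, Prod.smul_snd, Pi.smul_apply, Matrix.smul_apply, smul_eq_mul]
  have h1 : ∑ k, c * p.2.1 k * x k = c * ∑ k, p.2.1 k * x k := by
    rw [Finset.mul_sum]; exact Finset.sum_congr rfl fun k _ => by ring
  have h2 : ∑ k, ∑ l, c * p.2.2 k l * (x k * x l) = c * ∑ k, ∑ l, p.2.2 k l * (x k * x l) := by
    rw [Finset.mul_sum]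
    refine Finset.sum_congr rfl fun k _ => ?_
    rw [Finset.mul_sum]
    exact Finset.sum_congr rfl fun l _ => by ring
  rw [h1, h2]; ring

lemma toQP_add {n : ℕ} (w w' : BIdx n → ℝ) : toQP (w + w') = toQP w + toQP w' := rfl

lemma toQP_smul {n : ℕ} (c : ℝ) (w : BIdx n → ℝ) : toQP (c • w) = c • toQP w := rfl

/-- The map `w ↦ ∂^a (evalP w) (x)` as a linear map. -/
def Lmap {n : ℕ} (a : Fin n → ℕ) (x : E n) : (BIdx n → ℝ) →ₗ[ℝ] ℝ where
  toFun w := evalQ (mpdQ a (toQP w)) x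
  map_add' w w' := by
    show evalQ (mpdQ a (toQP (w + w'))) x = _
    rw [toQP_add, mpdQ_add, evalQ_add]
  map_smul' c w := by
    show evalQ (mpdQ a (toQP (c • w))) x = _
    rw [toQP_smul, mpdQ_smul, evalQ_smul]
    rfl

lemma natBasis_eq_evalP {n : ℕ} (j : BIdx n) : natBasis j = evalP (Pi.single j 1) := by
  funext x
  unfold evalP
  simp [Pi.single_apply, ite_mul, Finset.sum_ite_eq, Finset.mem_univ]

lemma mpd_evalP_apply {n : ℕ} (a : Fin n → ℕ) (w : BIdx n → ℝ) (x : E n) :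
    mpd a (evalP w) x = ∑ j, w j * mpd a (natBasis j) x := by
  have hw : w = ∑ j, w j • (Pi.single j 1 : BIdx n → ℝ) := by
    funext j'
    simp [Pi.single_apply, Finset.sum_ite_eq, Finset.mem_univ]
  have key : ∀ u : BIdx n → ℝ, mpd a (evalP u) x = Lmap a x u := by
    intro u
    rw [evalP_eq, mpd_evalQ]
    rfl
  rw [key]
  conv_lhs => rw [hw, map_sum]
  refine Finset.sum_congr rfl fun j _ => ?_
  rw [map_smul, natBasis_eq_evalP, key]
  rfl

lemma NQ_toQP_single_le {n : ℕ} (j : BIdx n) : NQ (toQP (Pi.single j 1)) ≤ 1 := by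
  obtain (⟨⟩ | i | s) := j
  · unfold NQ toQP
    simp [Pi.single_apply]
  · unfold NQ toQP
    simp only [Pi.single_apply, Matrix.of_apply]
    simp [Finset.sum_ite_eq, apply_ite]
  · unfold NQ toQP
    simp only [Pi.single_apply, Matrix.of_apply, Sum.inr.injEq, Sum.inl.injEq, reduceCtorEq,
      if_false, abs_zero, Finset.sum_const_zero, add_zero, zero_add, apply_ite abs, abs_one]
    induction s with
    | _ a b =>
      by_cases hab : a = b
      · subst hab
        have hT : ∀ k l : Fin n, (if s(k, l) = s(a, a) then (1:ℝ) else 0)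
            = if k = a then (if l = a then (1:ℝ) else 0) else 0 := by
          intro k l
          by_cases hk : k = a <;> by_cases hl : l = a <;>
            simp [Sym2.eq_iff, hk, hl]
        simp only [hT]
        simp [Finset.sum_ite_eq', Sym2.eq_iff]
        norm_num
      · have hT : ∀ k l : Fin n, (if s(k, l) = s(a, b) then (1:ℝ) else 0)
            = (if k = a then (if l = b then (1:ℝ) else 0) else 0)
              + (if k = b then (if l = a then (1:ℝ) else 0) else 0) := by
          intro k l
          by_cases hk : k = a <;> by_cases hk' : k = b <;> by_cases hl : l = a <;>
            by_cases hl' : l = b <;>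
            simp_all [Sym2.eq_iff] <;> tauto
        have hD : ∀ k : Fin n, (if s(k, k) = s(a, b) then (1:ℝ) else 0) = 0 := by
          intro k
          rw [if_neg]
          simp only [Sym2.eq_iff]
          rintro (⟨rfl, rfl⟩ | ⟨rfl, rfl⟩) <;> exact hab rfl
        simp only [hD]
        rw [Finset.sum_const_zero]
        simp only [hT]
        have : ∀ k : Fin n, ∑ l, ((if k = a then (if l = b then (1:ℝ) else 0) else 0)
            + (if k = b then (if l = a then (1:ℝ) else 0) else 0))
            = (if k = a then (1:ℝ) else 0) + (if k = b then (1:ℝ) else 0) := by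
          intro k
          rw [Finset.sum_add_distrib]
          congr 1 <;> by_cases h : k = a <;> by_cases h' : k = b <;>
            simp [h, h', Finset.sum_ite_eq']
        simp only [this]
        rw [Finset.sum_add_distrib]
        simp [Finset.sum_ite_eq']
        norm_num

lemma abs_mpd_natBasis_le {n : ℕ} (a : Fin n → ℕ) (j : BIdx n) (x : E n) (hx : ‖x‖ ≤ 1) :
    |mpd a (natBasis j) x| ≤ 1 := by
  rw [natBasis_eq_evalP, evalP_eq, mpd_evalQ]
  refine (abs_evalQ_le _ _ hx).trans ((NQ_mpdQ_le _ _).trans ?_)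
  exact NQ_toQP_single_le j

lemma card_BIdx (n : ℕ) : Fintype.card (BIdx n) = Q1 n := by
  have hcard : Fintype.card (BIdx n) = 1 + (n + (n + 1) * n / 2) := by
    simp [Fintype.card_sum, Sym2.card, Nat.choose_two_right]
  have h2 : (n + 1) * (n + 2) / 2 = n * (n + 1) / 2 + (n + 1) := by
    have : (n + 1) * (n + 2) = n * (n + 1) + 2 * (n + 1) := by ring
    rw [this, Nat.add_mul_div_left _ _ (by norm_num : 0 < 2)]
  have h3 : (n + 1) * n = n * (n + 1) := Nat.mul_comm _ _
  unfold Q1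
  omega

lemma cs_bound {n : ℕ} (w c : BIdx n → ℝ) (hc : ∀ j, |c j| ≤ 1) :
    |∑ j, w j * c j| ≤ Real.sqrt (∑ j, (w j)^2) * Real.sqrt (Q1 n) := by
  have h := Finset.sum_mul_sq_le_sq_mul_sq Finset.univ w c
  have hc2 : ∑ j, (c j)^2 ≤ (Q1 n : ℝ) := by
    calc ∑ j, (c j)^2 ≤ ∑ j : BIdx n, (1:ℝ) := by
          refine Finset.sum_le_sum fun j _ => ?_
          rw [← one_pow 2, ← sq_abs]
          exact pow_le_pow_left₀ (abs_nonneg _) (hc j) 2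
      _ = (Fintype.card (BIdx n) : ℝ) := by simp
      _ = (Q1 n : ℝ) := by rw [card_BIdx]
  have hw2 : (0:ℝ) ≤ ∑ j, (w j)^2 := Finset.sum_nonneg fun j _ => sq_nonneg _
  rw [← Real.sqrt_sq_eq_abs, ← Real.sqrt_mul hw2]
  apply Real.sqrt_le_sqrt
  calc (∑ j, w j * c j)^2 ≤ (∑ j, (w j)^2) * (∑ j, (c j)^2) := h
    _ ≤ (∑ j, (w j)^2) * (Q1 n : ℝ) := mul_le_mul_of_nonneg_left hc2 hw2

lemma norm_v_le {n : ℕ} (y : BIdx n → E n) (α : BIdx n → Fin n → ℕ)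
    (hpoised : IsUnit (Mhat y α)) (v : BIdx n → BIdx n → ℝ) (hv : BirkhoffLam y α v)
    (i : BIdx n) :
    Real.sqrt (∑ j, (v i j)^2) ≤ specNorm (Mhat y α)⁻¹ := by
  have hrow : ∀ i', ∑ j, Mhat y α i' j * v i j = if i = i' then 1 else 0 := by
    intro i'
    have h := hv i i'
    rw [mpd_evalP_apply] at h
    rw [← h]
    exact Finset.sum_congr rfl fun j _ => by rw [mul_comm]; rfl
  set V : EuclideanSpace ℝ (BIdx n) := (WithLp.equiv 2 _).symm (v i) with hV
  have hTV : Matrix.toEuclideanCLM (𝕜 := ℝ) (Mhat y α) V = EuclideanSpace.single i 1 := by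
    rw [hV, WithLp.equiv_symm_apply, Matrix.toEuclideanCLM_toLp, ← EuclideanSpace.toLp_single]
    congr 1
    funext i'
    have : (Mhat y α).mulVec (v i) i' = ∑ j, Mhat y α i' j * v i j := by
      simp [Matrix.mulVec, dotProduct]
    rw [this, hrow i', Pi.single_apply]
    simp [eq_comm]
  have hMM : (Mhat y α)⁻¹ * Mhat y α = 1 :=
    Matrix.nonsing_inv_mul _ ((Matrix.isUnit_iff_isUnit_det _).mp hpoised)
  have hinv : Matrix.toEuclideanCLM (𝕜 := ℝ) (Mhat y α)⁻¹ (EuclideanSpace.single i 1) = V := by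
    rw [← hTV, ← ContinuousLinearMap.comp_apply, ← ContinuousLinearMap.mul_def, ← map_mul,
      hMM, map_one, ContinuousLinearMap.one_apply]
  have hnorm : ‖V‖ = Real.sqrt (∑ j, (v i j)^2) := by
    rw [EuclideanSpace.norm_eq]
    congr 1
    exact Finset.sum_congr rfl fun j _ => by
      rw [Real.norm_eq_abs, sq_abs]
      rfl
  rw [← hnorm, ← hinv]
  calc ‖Matrix.toEuclideanCLM (𝕜 := ℝ) (Mhat y α)⁻¹ (EuclideanSpace.single i 1)‖
      ≤ specNorm (Mhat y α)⁻¹ * ‖EuclideanSpace.single i (1:ℝ)‖ :=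
        ContinuousLinearMap.le_opNorm _ _
    _ = specNorm (Mhat y α)⁻¹ := by rw [EuclideanSpace.norm_single]; simp

/-- forward direction of Theorem 3.14-analogue: if
`‖M̂⁻¹‖₂ ≤ Λ/√(q+1)` then the poised data `D` is `Λ`-poised with respect to `A`
in the ball `B(y^0, Δ(Y))`. -/
theorem lambda_poised_of_invnorm {n : ℕ} (hn : 1 ≤ n)
    (y : BIdx n → E n) (α : BIdx n → Fin n → ℕ)
    (A : Finset (Fin n → ℕ)) (h0A : (fun _ => 0) ∈ A) (hA : ∀ a ∈ A, mdeg a ≤ 2)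
    (hαA : ∀ i, α i ∈ A)
    (hrad : 0 < rad y) (hpoised : IsUnit (Mhat y α))
    (v : BIdx n → BIdx n → ℝ) (hv : BirkhoffLam y α v)
    (Λ : ℝ)
    (hM : specNorm (Mhat y α)⁻¹ ≤ Λ / Real.sqrt (Q1 n)) :
    ∀ i : BIdx n, ∀ a ∈ A, ∀ x ∈ closedBall (center y) (rad y),
      |mpd a (evalP (v i)) ((rad y)⁻¹ • (x - center y))| ≤ Λ := by
  intro i a _ x hx
  set xh : E n := (rad y)⁻¹ • (x - center y) with hxh
  have hxh1 : ‖xh‖ ≤ 1 := by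
    rw [hxh, norm_smul, Real.norm_eq_abs, abs_inv, abs_of_pos hrad]
    have hd : ‖x - center y‖ ≤ rad y := by
      rw [← dist_eq_norm]
      exact mem_closedBall.mp hx
    calc (rad y)⁻¹ * ‖x - center y‖ ≤ (rad y)⁻¹ * rad y :=
          mul_le_mul_of_nonneg_left hd (inv_nonneg.mpr hrad.le)
      _ = 1 := inv_mul_cancel₀ hrad.ne'
  have hQ1 : (0:ℝ) < Real.sqrt (Q1 n) := by
    apply Real.sqrt_pos.mpr
    have : 1 ≤ Q1 n := by
      unfold Q1
      have : 2 ≤ (n + 1) * (n + 2) := by nlinarith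
      omega
    exact_mod_cast Nat.lt_of_lt_of_le Nat.zero_lt_one this
  rw [mpd_evalP_apply]
  calc |∑ j, v i j * mpd a (natBasis j) xh|
      ≤ Real.sqrt (∑ j, (v i j)^2) * Real.sqrt (Q1 n) :=
        cs_bound (v i) _ (fun j => abs_mpd_natBasis_le a j xh hxh1)
    _ ≤ specNorm (Mhat y α)⁻¹ * Real.sqrt (Q1 n) :=
        mul_le_mul_of_nonneg_right (norm_v_le y α hpoised v hv i) hQ1.le
    _ ≤ (Λ / Real.sqrt (Q1 n)) * Real.sqrt (Q1 n) :=
        mul_le_mul_of_nonneg_right hM hQ1.le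
    _ = Λ := div_mul_cancel₀ _ hQ1.ne'
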